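/- arXiv:q-alg/9712025 — 4 statements merged into one kernel-verified Lean document; each statement's English description precedes it below -/
import Mathlib

section
/- Let A be a Frobenius algebra over a field K of characteristic 0, with Frobenius form f and characteristic element ω. If a ∈ A is nilpotent and e_i, e_i^# are as in a basis/dual-basis pair adapted to a socle filtration, then for each i, e_i e_i^# annihilates the nilradical; consequently ω · N(A) = 0, i.e., ω lies in the annihilator of the nilradical of A. -/
/-- In a Frobenius algebra over a field of characteristic 0, the
characteristic element `ω = Σ_i e_i * e_i^#` annihilates the nilradical: for every
nilpotent `a ∈ A` we have `ω * a = 0`, i.e. `ω` lies in the annihilator of `N(A)`. -/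
theorem stmt6 (K A : Type*) [Field K] [CharZero K] [CommRing A] [Algebra K A]
    [FiniteDimensional K A] (f : A →ₗ[K] K)
    {ι : Type*} [Fintype ι] [DecidableEq ι]
    (e : Module.Basis ι K A) (d : ι → A)
    (hd : ∀ i j, f (e i * d j) = if i = j then 1 else 0) :
    ∀ a : A, IsNilpotent a → (∑ i, e i * d i) * a = 0 := by
  -- coordinate formula: f (x * d j) = e.repr x j
  have hrepr : ∀ (x : A) (j : ι), f (x * d j) = e.repr x j := by
    intro x j
    conv_lhs => rw [← e.sum_repr x]
    rw [Finset.sum_mul, map_sum]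
    rw [Finset.sum_eq_single j]
    · rw [smul_mul_assoc, map_smul, hd, if_pos rfl, smul_eq_mul, mul_one]
    · intro i _ hij
      rw [smul_mul_assoc, map_smul, hd, if_neg hij, smul_eq_mul, mul_zero]
    · intro h; exact absurd (Finset.mem_univ j) h
  -- trace formula: trace of multiplication by b equals f (b * ω)
  have htr : ∀ b : A, LinearMap.trace K A (LinearMap.mulLeft K b)
      = f (b * ∑ i, e i * d i) := by
    intro b
    rw [LinearMap.trace_eq_matrix_trace K e, Matrix.trace]
    rw [Finset.mul_sum, map_sum]
    apply Finset.sum_congr rfl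
    intro i _
    rw [Matrix.diag_apply, LinearMap.toMatrix_apply, LinearMap.mulLeft_apply,
      ← hrepr, ← mul_assoc]
  intro a ha
  apply e.repr.injective
  ext j
  rw [map_zero, Finsupp.coe_zero, Pi.zero_apply, ← hrepr]
  have hnil : IsNilpotent (a * d j) := (Commute.all a (d j)).isNilpotent_mul_right ha
  have hnl : IsNilpotent (LinearMap.mulLeft K (a * d j)) := by
    obtain ⟨n, hn⟩ := hnil
    exact ⟨n, by rw [LinearMap.pow_mulLeft, hn, LinearMap.mulLeft_zero_eq_zero]⟩
  have := LinearMap.isNilpotent_trace_of_isNilpotent hnl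
  have h0 : LinearMap.trace K A (LinearMap.mulLeft K (a * d j)) = 0 := this.eq_zero
  rw [htr] at h0
  calc f ((∑ i, e i * d i) * a * d j) = f ((a * d j) * ∑ i, e i * d i) := by rw [mul_comm (a * d j), mul_assoc]
    _ = 0 := h0
end

section
/- The characteristic element ω of a Frobenius algebra A over a field of characteristic 0 is a unit if and only if A is semisimple. -/
section aux
set_option linter.unusedSectionVars false

variable {K A : Type*} [Field K] [CharZero K] [CommRing A] [Algebra K A]
    [FiniteDimensional K A] (f : A →ₗ[K] K)
    {ι : Type*} [Fintype ι] [DecidableEq ι]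
    (e : Module.Basis ι K A) (d : ι → A)
    (hd : ∀ i j, f (e i * d j) = if i = j then 1 else 0)

include hd in
/-- pairing against the dual family recovers coordinates -/
lemma stmt7_aux1 (x : A) (j : ι) : f (x * d j) = e.repr x j := by
  conv_lhs => rw [← e.sum_repr x]
  rw [Finset.sum_mul, map_sum]
  have : ∀ i, f (e.repr x i • e i * d j) = e.repr x i * (if i = j then 1 else 0) := by
    intro i
    rw [smul_mul_assoc, map_smul, hd, smul_eq_mul]
  simp_rw [this]
  simp

include hd in
/-- trace of multiplication by `a` equals `f (a * ω)` -/
lemma stmt7_aux2 (a : A) :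
    LinearMap.trace K A (LinearMap.mulLeft K a) = f (a * ∑ i, e i * d i) := by
  classical
  rw [LinearMap.trace_eq_matrix_trace K e, Matrix.trace]
  have : ∀ i, Matrix.diag (LinearMap.toMatrix e e (LinearMap.mulLeft K a)) i
      = f (a * (e i * d i)) := by
    intro i
    rw [Matrix.diag, LinearMap.toMatrix_apply, LinearMap.mulLeft_apply,
      ← stmt7_aux1 f e d hd (a * e i) i, mul_assoc]
  simp_rw [this]
  rw [← map_sum, ← Finset.mul_sum]

include hd in
lemma stmt7_aux3 (y : A) (hy : ∀ j, f (y * d j) = 0) : y = 0 := by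
  have : ∀ j, e.repr y j = 0 := fun j => by rw [← stmt7_aux1 f e d hd, hy]
  have h0 : e.repr y = 0 := by ext j; exact this j
  have := e.sum_repr y
  rw [h0] at this
  simpa using this.symm

end aux

/-- The characteristic element `ω = Σ_i e_i * e_i^#` of a Frobenius
algebra `A` over a field of characteristic 0 is a unit if and only if `A` is
semisimple. -/
theorem stmt7 (K A : Type*) [Field K] [CharZero K] [CommRing A] [Algebra K A]
    [FiniteDimensional K A] (f : A →ₗ[K] K)
    {ι : Type*} [Fintype ι] [DecidableEq ι]
    (e : Module.Basis ι K A) (d : ι → A)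
    (hd : ∀ i j, f (e i * d j) = if i = j then 1 else 0) :
    IsUnit (∑ i, e i * d i) ↔ IsSemisimpleRing A := by
  set ω := ∑ i, e i * d i with hω
  constructor
  · intro h
    have hred : IsReduced A := by
      constructor
      intro x hx
      -- for every b, trace of mult by x*b is nilpotent hence 0
      have key : ∀ b : A, f (x * b * ω) = 0 := by
        intro b
        have hnil : IsNilpotent (x * b) := (Commute.all x b).isNilpotent_mul_right hx
        have hnil' : IsNilpotent (LinearMap.mulLeft K (x * b)) := by
          obtain ⟨n, hn⟩ := hnil
          exact ⟨n, by rw [LinearMap.pow_mulLeft, hn, LinearMap.mulLeft_zero_eq_zero]⟩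
        have := LinearMap.isNilpotent_trace_of_isNilpotent hnil'
        have h0 : LinearMap.trace K A (LinearMap.mulLeft K (x * b)) = 0 := this.eq_zero
        rw [stmt7_aux2 f e d hd] at h0
        exact h0
      -- hence x * ω = 0
      have hxω : x * ω = 0 := by
        apply stmt7_aux3 f e d hd
        intro j
        have := key (d j)
        calc f (x * ω * d j) = f (x * d j * ω) := by ring_nf
        _ = 0 := key (d j)
      -- ω is a unit, so x = 0
      obtain ⟨u, hu⟩ := h
      have : x * (ω * ↑u⁻¹) = 0 := by rw [← mul_assoc, hxω, zero_mul]
      rwa [← hu, Units.mul_inv, mul_one] at this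
    have hart : IsArtinianRing A := isArtinian_of_tower K inferInstance
    exact IsArtinianRing.isSemisimpleRing_of_isReduced A
  · intro h
    -- the annihilator of ω
    set I : Submodule A A := LinearMap.ker (LinearMap.mulLeft A ω) with hI
    have hImem : ∀ x : A, x ∈ I ↔ ω * x = 0 := by
      intro x; simp [hI, LinearMap.mem_ker]
    -- claim: I = ⊥
    have hIbot : I = ⊥ := by
      by_contra hne
      obtain ⟨J, hJ⟩ := exists_isCompl I
      -- write 1 = e₀ + e₁ with e₀ ∈ I, e₁ ∈ J
      have h1 : (1 : A) ∈ I ⊔ J := by rw [hJ.sup_eq_top]; trivial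
      obtain ⟨a, ha, b, hb, hab⟩ := Submodule.mem_sup.mp h1
      -- a * b ∈ I ⊓ J = ⊥
      have hab0 : a * b = 0 := by
        have h1 : a * b ∈ I := by
          have := I.smul_mem b ha
          simpa [smul_eq_mul, mul_comm] using this
        have h2 : a * b ∈ J := by
          have := J.smul_mem a hb
          simpa [smul_eq_mul] using this
        have : a * b ∈ I ⊓ J := ⟨h1, h2⟩
        rwa [hJ.inf_eq_bot, Submodule.mem_bot] at this
      -- a is idempotent
      have hidem : a * a = a := by
        have : a * (a + b) = a := by rw [hab, mul_one]
        rwa [mul_add, hab0, add_zero] at this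
      -- a ≠ 0
      have hane : a ≠ 0 := by
        intro ha0
        apply hne
        rw [Submodule.eq_bot_iff]
        intro x hx
        have hx1 : x * b ∈ I := by
          have := I.smul_mem b hx
          simpa [smul_eq_mul, mul_comm] using this
        have hx2 : x * b ∈ J := by
          have := J.smul_mem x hb
          simpa [smul_eq_mul] using this
        have hxb : x * b = 0 := by
          have : x * b ∈ I ⊓ J := ⟨hx1, hx2⟩
          rwa [hJ.inf_eq_bot, Submodule.mem_bot] at this
        have : x * (a + b) = x := by rw [hab, mul_one]
        rw [mul_add, ha0, mul_zero, zero_add, hxb] at this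
        exact this.symm
      -- ω * a = 0
      have hωa : ω * a = 0 := (hImem a).mp ha
      -- mulLeft a is a nonzero projection; its trace is a positive integer, but equals 0
      set p := LinearMap.range (LinearMap.mulLeft K a) with hp
      have hproj : LinearMap.IsProj p (LinearMap.mulLeft K a) := by
        constructor
        · intro x; exact LinearMap.mem_range_self _ x
        · rintro x ⟨y, rfl⟩
          simp only [LinearMap.mulLeft_apply, ← mul_assoc, hidem]
      have htr : LinearMap.trace K A (LinearMap.mulLeft K a)
          = (Module.finrank K p : K) := hproj.trace
      have htr0 : LinearMap.trace K A (LinearMap.mulLeft K a) = 0 := by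
        rw [stmt7_aux2 f e d hd, mul_comm, hωa, map_zero]
      rw [htr0] at htr
      have hfr : Module.finrank K p = 0 := by exact_mod_cast htr.symm
      have hpbot : p = ⊥ := Submodule.finrank_eq_zero.mp hfr
      have hap : a ∈ p := ⟨1, by simp⟩
      rw [hpbot, Submodule.mem_bot] at hap
      exact hane hap
    -- from I = ⊥, multiplication by ω is injective, hence surjective, hence ω is a unit
    have hinj : Function.Injective (LinearMap.mulLeft K ω) := by
      rw [← LinearMap.ker_eq_bot]
      rw [Submodule.eq_bot_iff]
      intro x hx
      have : ω * x = 0 := by simpa using hx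
      have : x ∈ I := (hImem x).mpr this
      rwa [hIbot, Submodule.mem_bot] at this
    have hsurj := (LinearMap.injective_iff_surjective).mp hinj
    obtain ⟨v, hv⟩ := hsurj 1
    exact IsUnit.of_mul_eq_one (a := ω) v (by simpa using hv)
end

section
/- Let (A, f) be a Frobenius extension of R, θ : R → K a surjective K-linear ring homomorphism onto a field K of characteristic 0, and B = A ⊗_R K. If the characteristic element ω_{A,f} is a unit in A, then B is semisimple. -/
open TensorProduct

section Aux

variable {R K A : Type*} [CommRing R] [Field K] [CommRing A]
    [Algebra R K] [Algebra R A]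
    {ι : Type*} [Fintype ι] [DecidableEq ι]

/-- Coordinate formula: for the base-changed Frobenius form. -/
lemma stmt13_coord (e : Module.Basis ι R A) (d : ι → A) (f : A →ₗ[R] R)
    (hd : ∀ i j, f (e i * d j) = if i = j then 1 else 0)
    (x : K ⊗[R] A) (j : ι) :
    (((Algebra.linearMap R K).comp f).liftBaseChange K)
        (x * (1 ⊗ₜ[R] d j))
      = (Algebra.TensorProduct.basis K e).repr x j := by
  classical
  set F : K ⊗[R] A →ₗ[K] K := ((Algebra.linearMap R K).comp f).liftBaseChange K
  have heq : F ∘ₗ LinearMap.mulRight K ((1:K) ⊗ₜ[R] d j)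
      = (Algebra.TensorProduct.basis K e).coord j := by
    apply Module.Basis.ext (Algebra.TensorProduct.basis K e)
    intro i
    simp only [LinearMap.comp_apply, LinearMap.mulRight_apply,
      Algebra.TensorProduct.basis_apply, Algebra.TensorProduct.tmul_mul_tmul, one_mul,
      Module.Basis.coord_apply, Module.Basis.repr_self]
    have hFt : F ((1:K) ⊗ₜ[R] (e i * d j)) = algebraMap R K (f (e i * d j)) := by
      simp [F]
    rw [hFt, hd i j]
    by_cases h : i = j <;> simp [h, Finsupp.single_apply]
  have := LinearMap.congr_fun heq x
  simpa using this

end Aux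

/-- If the characteristic element `ω = Σ e_i * e_i^#` of a Frobenius
extension `(A, f)` of `R` is a unit in `A`, then for any surjective homomorphism
`θ : R → K` onto a field of characteristic 0, the base change `B = K ⊗[R] A` is
semisimple. -/
theorem stmt13 (R K A : Type*) [CommRing R] [Field K] [CharZero K] [CommRing A]
    [Algebra R K] [Algebra R A]
    (hsurj : Function.Surjective (algebraMap R K))
    {ι : Type*} [Fintype ι] [DecidableEq ι]
    (e : Module.Basis ι R A) (d : ι → A) (f : A →ₗ[R] R)
    (hd : ∀ i j, f (e i * d j) = if i = j then 1 else 0)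
    (hunit : IsUnit (∑ i, e i * d i)) :
    IsSemisimpleRing (K ⊗[R] A) := by
  classical
  set B := K ⊗[R] A with hB
  let b : Module.Basis ι K B := Algebra.TensorProduct.basis K e
  haveI : Module.Finite K B := Module.Finite.of_basis b
  set F : B →ₗ[K] K := ((Algebra.linearMap R K).comp f).liftBaseChange K with hFdef
  -- trace formula
  have htr : ∀ z : B, LinearMap.trace K B (LinearMap.mulLeft K z)
      = F (z * (1 ⊗ₜ[R] ∑ i, e i * d i)) := by
    intro z
    rw [LinearMap.trace_eq_matrix_trace K b, Matrix.trace]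
    have hdiag : ∀ j, (LinearMap.toMatrix b b (LinearMap.mulLeft K z)).diag j
        = F (z * ((1:K) ⊗ₜ[R] e j) * ((1:K) ⊗ₜ[R] d j)) := by
      intro j
      rw [Matrix.diag, LinearMap.toMatrix_apply, LinearMap.mulLeft_apply,
        stmt13_coord e d f hd]
      congr 1
      rw [Algebra.TensorProduct.basis_apply]
    rw [Finset.sum_congr rfl fun j _ => hdiag j]
    have : (1:K) ⊗ₜ[R] (∑ i, e i * d i) = ∑ j, ((1:K) ⊗ₜ[R] e j) * ((1:K) ⊗ₜ[R] d j) := by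
      rw [tmul_sum]
      exact Finset.sum_congr rfl fun j _ => by
        rw [Algebra.TensorProduct.tmul_mul_tmul, one_mul]
    rw [this, Finset.mul_sum, map_sum]
    exact Finset.sum_congr rfl fun j _ => by rw [mul_assoc]
  -- reducedness
  obtain ⟨u, hu⟩ := hunit
  haveI : IsReduced B := by
    constructor
    intro x hx
    refine (Algebra.TensorProduct.basis K e).repr.injective ?_
    ext j
    rw [map_zero, Finsupp.zero_apply, ← stmt13_coord e d f hd x j]
    have key : x * (1 ⊗ₜ[R] d j)
        = (x * ((1:K) ⊗ₜ[R] (d j * (↑u⁻¹ : A)))) * ((1:K) ⊗ₜ[R] (∑ i, e i * d i)) := by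
      rw [mul_assoc, Algebra.TensorProduct.tmul_mul_tmul, one_mul, ← hu, mul_assoc,
        Units.inv_mul, mul_one]
    rw [key, ← htr]
    have hnil : IsNilpotent (x * ((1:K) ⊗ₜ[R] (d j * (↑u⁻¹ : A)))) :=
      (Commute.all _ _).isNilpotent_mul_right hx
    have : IsNilpotent (LinearMap.mulLeft K (x * ((1:K) ⊗ₜ[R] (d j * (↑u⁻¹ : A))))) := by
      obtain ⟨n, hn⟩ := hnil
      exact ⟨n, by rw [LinearMap.pow_mulLeft, hn, LinearMap.mulLeft_zero_eq_zero]⟩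
    exact (LinearMap.isNilpotent_trace_of_isNilpotent this).eq_zero
  haveI : IsArtinianRing B := isArtinian_of_tower K inferInstance
  exact IsArtinianRing.isSemisimpleRing_of_isReduced B
end

section
/- Let (A, f) be a Frobenius extension of R with characteristic element ω, θ : R → K a surjective homomorphism onto a field of characteristic 0, and θ̃ : A → B = A ⊗_R K the induced map. If there exists a ∈ A with ω·a = 0 and θ̃(a) ≠ 0, then B is not semisimple. -/
open TensorProduct

set_option maxHeartbeats 2000000 in
set_option synthInstance.maxHeartbeats 1000000 in
/-- If the characteristic element `ω = Σ e_i * e_i^#` of a Frobenius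
extension `(A, f)` of `R` is annihilated by some `a ∈ A` whose image
`θ̃ a = 1 ⊗ a` in `B = K ⊗[R] A` is nonzero, then `B` is not semisimple. -/
theorem stmt14 (R K A : Type*) [CommRing R] [Field K] [CharZero K] [CommRing A]
    [Algebra R K] [Algebra R A]
    (hsurj : Function.Surjective (algebraMap R K))
    {ι : Type*} [Fintype ι] [DecidableEq ι]
    (e : Module.Basis ι R A) (d : ι → A) (f : A →ₗ[R] R)
    (hd : ∀ i j, f (e i * d j) = if i = j then 1 else 0)
    (a : A) (ha : (∑ i, e i * d i) * a = 0)
    (ha' : ((1 : K) ⊗ₜ[R] a : K ⊗[R] A) ≠ 0) :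
    ¬ IsSemisimpleRing (K ⊗[R] A) := by
  classical
  intro hss
  haveI : Module.Finite R A := Module.Finite.of_basis e
  haveI : Module.Free R A := Module.Free.of_basis e
  haveI : Module.Finite K (K ⊗[R] A) :=
    Module.Finite.of_basis (Algebra.TensorProduct.basis K e)
  haveI : IsArtinianRing (K ⊗[R] A) := isArtinian_of_tower K inferInstance
  -- the ring `B = K ⊗[R] A` is reduced, since it is semisimple and commutative
  haveI hred : IsReduced (K ⊗[R] A) := by
    have hrad := IsSemisimpleModule.annihilator_isRadical (K ⊗[R] A) (K ⊗[R] A)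
    constructor
    intro x hx
    obtain ⟨n, hn⟩ := hx
    have hxann : x ∈ Module.annihilator (K ⊗[R] A) (K ⊗[R] A) :=
      hrad ⟨n, Module.mem_annihilator.mpr fun m => by rw [smul_eq_mul, hn, zero_mul]⟩
    simpa using Module.mem_annihilator.mp hxann 1
  -- coordinates with respect to `e` are given by `f` and the dual family `d`
  have hcoord : ∀ (z : A) (j : ι), e.repr z j = f (z * d j) := by
    intro z j
    have h : e.coord j = f ∘ₗ LinearMap.mulRight R (d j) := by
      apply e.ext
      intro i
      simp [Module.Basis.coord_apply, Finsupp.single_apply, hd i j]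
    have := congrArg (fun g : A →ₗ[R] R => g z) h
    simpa [Module.Basis.coord_apply] using this
  -- the trace of multiplication by `y` equals `f (y * ω)`
  have htrace : ∀ y : A,
      LinearMap.trace R A (LinearMap.mulLeft R y) = f (y * ∑ i, e i * d i) := by
    intro y
    rw [LinearMap.trace_eq_matrix_trace R e, Matrix.trace, Finset.mul_sum, map_sum]
    refine Finset.sum_congr rfl fun j _ => ?_
    rw [Matrix.diag_apply, LinearMap.toMatrix_apply, LinearMap.mulLeft_apply,
      hcoord, mul_assoc]
  -- multiplication by `1 ⊗ y` on `K ⊗[R] A` is the base change of multiplication by `y`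
  have hbase : ∀ y : A,
      LinearMap.mulLeft K ((1 : K) ⊗ₜ[R] y : K ⊗[R] A)
        = (LinearMap.mulLeft R y).baseChange K := by
    intro y
    ext x
    simp [Algebra.TensorProduct.tmul_mul_tmul]
  -- the trace of multiplication by `1 ⊗ (x * a)` vanishes
  have hTa : ∀ x : A,
      LinearMap.trace K (K ⊗[R] A)
        (LinearMap.mulLeft K ((1 : K) ⊗ₜ[R] (x * a) : K ⊗[R] A)) = 0 := by
    intro x
    rw [hbase, LinearMap.trace_baseChange, htrace]
    have h : x * a * ∑ i, e i * d i = x * ((∑ i, e i * d i) * a) := by ring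
    rw [h, ha, mul_zero, map_zero, map_zero]
  -- hence the trace of multiplication by `b * (1 ⊗ a)` vanishes for every `b`
  set a' : (K ⊗[R] A) := (1 : K) ⊗ₜ[R] a with ha'def
  have hT : ∀ b : K ⊗[R] A,
      LinearMap.trace K (K ⊗[R] A) (LinearMap.mulLeft K (b * a')) = 0 := by
    intro b
    induction b using TensorProduct.induction_on with
    | zero => simp
    | tmul k x =>
        obtain ⟨r, rfl⟩ := hsurj k
        have key : ((algebraMap R K r) ⊗ₜ[R] x : K ⊗[R] A) * a'
            = (1 : K) ⊗ₜ[R] (r • x * a) := by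
          rw [ha'def, Algebra.TensorProduct.tmul_mul_tmul, mul_one, smul_mul_assoc,
            TensorProduct.tmul_smul, TensorProduct.smul_tmul',
            Algebra.algebraMap_eq_smul_one]
        rw [key]
        exact hTa (r • x)
    | add b₁ b₂ h₁ h₂ =>
        have h3 : LinearMap.mulLeft K ((b₁ + b₂) * a')
            = LinearMap.mulLeft K (b₁ * a') + LinearMap.mulLeft K (b₂ * a') :=
          LinearMap.ext fun z => by
            simp only [LinearMap.mulLeft_apply, LinearMap.add_apply, add_mul]
        rw [h3, map_add, h₁, h₂, add_zero]
  -- decompose `K ⊗[R] A` as a product of fields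
  set φ := IsArtinianRing.equivPi (K ⊗[R] A) with hφdef
  obtain ⟨i, hi⟩ : ∃ i, φ a' i ≠ 0 := by
    by_contra h
    push_neg at h
    exact ha' (φ.injective (by rw [map_zero]; funext j; exact h j))
  letI : Field ((K ⊗[R] A) ⧸ i.1) := IsArtinianRing.fieldOfSubtypeIsMaximal _ i
  set b : K ⊗[R] A := φ.symm (Pi.single i ((φ a' i)⁻¹)) with hbdef
  set ε : K ⊗[R] A := b * a' with hεdef
  have hφε : φ ε = Pi.single i 1 := by
    rw [hεdef, map_mul, hbdef, AlgEquiv.apply_symm_apply]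
    funext j
    rcases eq_or_ne j i with rfl | hji
    · simp only [Pi.mul_apply, Pi.single_eq_same]
      exact inv_mul_cancel₀ hi
    · simp [Pi.single_eq_of_ne hji]
  have hε1 : ε ≠ 0 := by
    intro h
    rw [h, map_zero] at hφε
    have h2 := congrFun hφε i
    simp only [Pi.zero_apply, Pi.single_eq_same] at h2
    exact one_ne_zero h2.symm
  have hidem : ε * ε = ε := by
    apply φ.injective
    rw [map_mul, hφε]
    funext j
    rcases eq_or_ne j i with rfl | hji
    · simp
    · simp [Pi.single_eq_of_ne hji]
  -- multiplication by `ε` is a projection onto its range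
  have hproj : LinearMap.IsProj (LinearMap.range (LinearMap.mulLeft K ε))
      (LinearMap.mulLeft K ε) := by
    refine ⟨fun x => LinearMap.mem_range_self _ x, fun x hx => ?_⟩
    obtain ⟨y, rfl⟩ := hx
    simp only [LinearMap.mulLeft_apply]
    rw [← mul_assoc, hidem]
  have htr := hproj.trace
  have htr0 : LinearMap.trace K (K ⊗[R] A) (LinearMap.mulLeft K ε) = 0 := hT b
  rw [htr] at htr0
  have hrange : LinearMap.range (LinearMap.mulLeft K ε) ≠ ⊥ := by
    intro h
    have hmem : ε ∈ LinearMap.range (LinearMap.mulLeft K ε) := ⟨1, mul_one ε⟩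
    rw [h, Submodule.mem_bot] at hmem
    exact hε1 hmem
  have hfr : Module.finrank K (LinearMap.range (LinearMap.mulLeft K ε)) ≠ 0 := by
    rw [Ne, Submodule.finrank_eq_zero]
    exact hrange
  exact hfr (Nat.cast_injective (by rw [htr0, Nat.cast_zero]))
end
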